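/- Let G=(V,E) be a weighted locally finite graph and let Ω⊂V be a bounded domain with Ω°≠∅ and ∂Ω≠∅. Let m∈ℕ and p∈[1,∞). Then there exists a constant C_{m,p}>0, depending only on m, p and Ω, such that ‖u‖_{L^q(Ω)} ≤ C_{m,p} ‖∇^m u‖_{L^p(Ω)} for all q∈[1,∞] and all u∈W^{m,p}_0(Ω). -/

import Mathlib

open scoped BigOperators NNReal

/-- A weighted locally finite (non-oriented) graph on the vertex set `V`:
a symmetric non-negative weight `w` such that every vertex belongs to finitely
many edges (`xy ∈ E` iff `w x y > 0`). -/
structure WLFG (V : Type*) where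
  w : V → V → ℝ
  symm : ∀ x y, w x y = w y x
  nonneg : ∀ x y, 0 ≤ w x y
  locFin : ∀ x, {y | w x y ≠ 0}.Finite

namespace WLFG

variable {V : Type*} (G : WLFG V)

/-- The edge (adjacency) relation: `x ∼ y` iff `w x y > 0`. -/
def Adj (x y : V) : Prop := 0 < G.w x y

/-- The measure `𝔪(x) = ∑_{y ∈ V} w x y`. -/
noncomputable def mes (x : V) : ℝ := ∑ᶠ y, G.w x y

/-- `∫_A u d𝔪 = ∑_{x ∈ A} u x * 𝔪 x`. -/
noncomputable def integral (A : Set V) (u : V → ℝ) : ℝ := ∑ᶠ x ∈ A, u x * G.mes x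

/-- The vertex boundary `∂Ω = {x ∈ Ω : ∃ y ∉ Ω, xy ∈ E}`. -/
def bdry (Ω : Set V) : Set V := {x | x ∈ Ω ∧ ∃ y, y ∉ Ω ∧ G.Adj x y}

/-- The vertex interior `Ω° = Ω \ ∂Ω`. -/
def intr (Ω : Set V) : Set V := Ω \ G.bdry Ω

/-- `Ω` is connected as a subgraph: any two of its vertices are joined by a
path inside `Ω`. -/
def ConnectedIn (Ω : Set V) : Prop :=
  ∀ x ∈ Ω, ∀ y ∈ Ω, Relation.ReflTransGen (fun a b => a ∈ Ω ∧ b ∈ Ω ∧ G.Adj a b) x y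

/-- A bounded domain: a connected subgraph, bounded with respect to the vertex
path distance; for a locally finite graph this means connected and finite. -/
def IsBoundedDomain (Ω : Set V) : Prop := G.ConnectedIn Ω ∧ Ω.Finite

/-- The graph Laplacian `Δu(x) = (1/𝔪(x)) ∑_y w_{xy}(u(y) - u(x))`. -/
noncomputable def lap (u : V → ℝ) (x : V) : ℝ :=
  (1 / G.mes x) * ∑ᶠ y, G.w x y * (u y - u x)

/-- The gradient form `Γ(u,v)(x) = (1/(2𝔪(x))) ∑_y w_{xy}(u(y)-u(x))(v(y)-v(x))`. -/
noncomputable def gamma (u v : V → ℝ) (x : V) : ℝ :=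
  (1 / (2 * G.mes x)) * ∑ᶠ y, G.w x y * (u y - u x) * (v y - v x)

/-- The slope `|∇u|(x) = √(Γ(u,u)(x))`. -/
noncomputable def slope (u : V → ℝ) (x : V) : ℝ := Real.sqrt (G.gamma u u x)

/-- The `k`-slope: `|∇^k u| = |∇(Δ^{(k-1)/2} u)|` for `k` odd and `|Δ^{k/2} u|`
for `k` even. -/
noncomputable def mslope (k : ℕ) (u : V → ℝ) (x : V) : ℝ :=
  if k % 2 = 1 then G.slope ((G.lap)^[(k - 1) / 2] u) x
  else |(G.lap)^[k / 2] u x|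

/-- The `L^p(Ω)` norm `(∑_{x ∈ Ω} |u x|^p 𝔪 x)^(1/p)` for a real exponent `p`. -/
noncomputable def lpNorm (Ω : Set V) (p : ℝ) (u : V → ℝ) : ℝ :=
  (∑ᶠ x ∈ Ω, |u x| ^ p * G.mes x) ^ (1 / p)

/-- The `L^∞(Ω)` norm `max_{x ∈ Ω} |u x|`. -/
noncomputable def linfNorm (_G : WLFG V) (Ω : Set V) (u : V → ℝ) : ℝ :=
  sSup ((fun x => |u x|) '' Ω)

/-- The `W^{m,p}_0(Ω)` norm `‖∇^m u‖_{L^p(Ω)}`. -/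
noncomputable def wNorm (Ω : Set V) (k : ℕ) (p : ℝ) (u : V → ℝ) : ℝ :=
  G.lpNorm Ω p (G.mslope k u)

/-- Membership in `W^{m,p}_0(Ω)`: `|∇^j u| = 0` on `∂Ω` for all `0 ≤ j ≤ m-1`. -/
def MemW0 (Ω : Set V) (k : ℕ) (u : V → ℝ) : Prop :=
  ∀ j < k, ∀ x ∈ G.bdry Ω, G.mslope j u x = 0

/-- The `p`-Laplacian
`Δ_p u(x) = (1/𝔪(x)) ∑_{y ∈ Ω} (|∇u|^{p-2}(y) + |∇u|^{p-2}(x)) w_{xy} (u(y)-u(x))`. -/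
noncomputable def plap (Ω : Set V) (p : ℝ) (u : V → ℝ) (x : V) : ℝ :=
  (1 / G.mes x) *
    ∑ᶠ y ∈ Ω, (G.slope u y ^ (p - 2) + G.slope u x ^ (p - 2)) * G.w x y * (u y - u x)

/-- The distributional pairing `∫_Ω L_{m,p} u · φ d𝔪` defining the
`(m,p)`-Laplacian. -/
noncomputable def mpPairing (Ω : Set V) (k : ℕ) (p : ℝ) (u φ : V → ℝ) : ℝ :=
  if k % 2 = 1 then
    ∑ᶠ x ∈ Ω, G.mslope k u x ^ (p - 2) *
      G.gamma ((G.lap)^[(k - 1) / 2] u) ((G.lap)^[(k - 1) / 2] φ) x * G.mes x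
  else
    ∑ᶠ x ∈ Ω, G.mslope k u x ^ (p - 2) *
      ((G.lap)^[k / 2] u x) * ((G.lap)^[k / 2] φ x) * G.mes x

/-- `u ∈ W^{m,p}_0(Ω)` solves `L_{m,p} u = g` in `Ω°` (together with the
boundary conditions `|∇^j u| = 0` on `∂Ω`, `0 ≤ j ≤ m-1`), where the
`(m,p)`-Laplacian is defined in the distributional sense. -/
def IsMPSolution (Ω : Set V) (k : ℕ) (p : ℝ) (u g : V → ℝ) : Prop :=
  G.MemW0 Ω k u ∧
  ∃ L : V → ℝ,
    (∀ φ : V → ℝ, G.MemW0 Ω k φ →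
      G.mpPairing Ω k p u φ = G.integral Ω (fun x => L x * φ x)) ∧
    ∀ x ∈ G.intr Ω, L x = g x


noncomputable def nbr (x : V) : Finset V := (G.locFin x).toFinset

lemma mes_eq (x : V) : G.mes x = ∑ y ∈ G.nbr x, G.w x y := by
  apply finsum_eq_sum_of_support_subset
  intro y hy
  simp [nbr, Set.Finite.mem_toFinset]
  exact hy

lemma lap_eq (u : V → ℝ) (x : V) :
    G.lap u x = (1 / G.mes x) * ∑ y ∈ G.nbr x, G.w x y * (u y - u x) := by
  unfold lap
  congr 1
  apply finsum_eq_sum_of_support_subset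
  intro y hy
  simp only [Function.mem_support] at hy
  simp [nbr, Set.Finite.mem_toFinset]
  intro h; rw [h] at hy; simp at hy

lemma gamma_eq (u v : V → ℝ) (x : V) :
    G.gamma u v x = (1 / (2 * G.mes x)) * ∑ y ∈ G.nbr x, G.w x y * (u y - u x) * (v y - v x) := by
  unfold gamma
  congr 1
  apply finsum_eq_sum_of_support_subset
  intro y hy
  simp only [Function.mem_support] at hy
  simp [nbr, Set.Finite.mem_toFinset]
  intro h; rw [h] at hy; simp at hy

lemma mes_nonneg (x : V) : 0 ≤ G.mes x := by
  rw [mes_eq]; exact Finset.sum_nonneg fun y _ => G.nonneg x y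

lemma mes_pos {x y : V} (h : G.Adj x y) : 0 < G.mes x := by
  rw [mes_eq]
  have hy : y ∈ G.nbr x := by simp [nbr, Set.Finite.mem_toFinset]; exact ne_of_gt h
  calc (0:ℝ) < G.w x y := h
    _ ≤ _ := Finset.single_le_sum (fun z _ => G.nonneg x z) hy

lemma gamma_self_nonneg (u : V → ℝ) (x : V) : 0 ≤ G.gamma u u x := by
  rw [gamma_eq]
  apply mul_nonneg
  · have := G.mes_nonneg x
    rw [one_div]
    apply inv_nonneg.mpr; linarith
  · apply Finset.sum_nonneg
    intro y _
    have := G.nonneg x y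
    nlinarith [sq_nonneg (u y - u x)]

lemma slope_nonneg (u : V → ℝ) (x : V) : 0 ≤ G.slope u x := Real.sqrt_nonneg _


lemma edge_sq_le (u : V → ℝ) {x : V} (hx : 0 < G.mes x) (y : V) :
    G.w x y * (u y - u x) ^ 2 ≤ 2 * G.mes x * G.gamma u u x := by
  have h2 : 2 * G.mes x * G.gamma u u x
      = ∑ z ∈ G.nbr x, G.w x z * (u z - u x) * (u z - u x) := by
    rw [gamma_eq]
    field_simp
  rw [h2]
  rcases eq_or_ne (G.w x y) 0 with h | h
  · rw [h, zero_mul]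
    apply Finset.sum_nonneg
    intro z _
    have := G.nonneg x z
    nlinarith [sq_nonneg (u z - u x)]
  · have hy : y ∈ G.nbr x := by simp [nbr, Set.Finite.mem_toFinset]; exact h
    calc G.w x y * (u y - u x) ^ 2 = G.w x y * (u y - u x) * (u y - u x) := by ring
      _ ≤ _ := Finset.single_le_sum (f := fun z => G.w x z * (u z - u x) * (u z - u x))
          (fun z _ => by have := G.nonneg x z; nlinarith [sq_nonneg (u z - u x)]) hy

lemma edge_abs_le (u : V → ℝ) {x y : V} (h : G.Adj x y) :
    |u y - u x| ≤ Real.sqrt (2 * G.mes x / G.w x y) * G.slope u x := by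
  have hx : 0 < G.mes x := G.mes_pos h
  have hsq : (u y - u x) ^ 2 ≤ (2 * G.mes x / G.w x y) * G.gamma u u x := by
    rw [div_mul_eq_mul_div, le_div_iff₀ h]
    calc (u y - u x) ^ 2 * G.w x y = G.w x y * (u y - u x) ^ 2 := by ring
      _ ≤ _ := G.edge_sq_le u hx y
  calc |u y - u x| = Real.sqrt ((u y - u x) ^ 2) := (Real.sqrt_sq_eq_abs _).symm
    _ ≤ Real.sqrt ((2 * G.mes x / G.w x y) * G.gamma u u x) := Real.sqrt_le_sqrt hsq
    _ = _ := Real.sqrt_mul (div_nonneg (by have := G.mes_pos h; linarith) (le_of_lt h)) _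

lemma lap_add (u v : V → ℝ) (x : V) :
    G.lap (u + v) x = G.lap u x + G.lap v x := by
  simp only [lap_eq, Pi.add_apply]
  rw [← mul_add, ← Finset.sum_add_distrib]
  congr 1
  apply Finset.sum_congr rfl
  intro y _
  ring

lemma lap_smul (c : ℝ) (u : V → ℝ) (x : V) :
    G.lap (c • u) x = c * G.lap u x := by
  simp only [lap_eq, Pi.smul_apply, smul_eq_mul]
  rw [show ∑ y ∈ G.nbr x, G.w x y * (c * u y - c * u x)
      = c * ∑ y ∈ G.nbr x, G.w x y * (u y - u x) by
    rw [Finset.mul_sum]; exact Finset.sum_congr rfl fun y _ => by ring]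
  ring

lemma lap_congr {u v : V → ℝ} {x : V} (hx : u x = v x)
    (h : ∀ y, G.w x y ≠ 0 → u y = v y) : G.lap u x = G.lap v x := by
  simp only [lap_eq]
  congr 1
  apply Finset.sum_congr rfl
  intro y hy
  have hw : G.w x y ≠ 0 := by simpa [nbr, Set.Finite.mem_toFinset] using hy
  rw [h y hw, hx]

lemma gamma_congr {u v : V → ℝ} {x : V} (hx : u x = v x)
    (h : ∀ y, G.w x y ≠ 0 → u y = v y) : G.gamma u u x = G.gamma v v x := by
  simp only [gamma_eq]
  congr 1
  apply Finset.sum_congr rfl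
  intro y hy
  have hw : G.w x y ≠ 0 := by simpa [nbr, Set.Finite.mem_toFinset] using hy
  rw [h y hw, hx]

lemma lap_zero_eq {v : V → ℝ} {x : V} (hx : 0 < G.mes x) (h0 : G.lap v x = 0)
    (hle : ∀ y, G.w x y ≠ 0 → v y ≤ v x) :
    ∀ y, G.w x y ≠ 0 → v y = v x := by
  have hsum : ∑ y ∈ G.nbr x, G.w x y * (v y - v x) = 0 := by
    rw [lap_eq] at h0
    rcases mul_eq_zero.mp h0 with h | h
    · exfalso; rw [one_div] at h; exact (inv_ne_zero (ne_of_gt hx)) h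
    · exact h
  have hterm : ∀ y ∈ G.nbr x, G.w x y * (v y - v x) = 0 := by
    intro y hy
    have := (Finset.sum_eq_zero_iff_of_nonpos ?_).mp hsum y hy
    · exact this
    · intro z hz
      have hw : G.w x z ≠ 0 := by simpa [nbr, Set.Finite.mem_toFinset] using hz
      have := hle z hw
      have := G.nonneg x z
      nlinarith
  intro y hw
  have hy : y ∈ G.nbr x := by simp [nbr, Set.Finite.mem_toFinset]; exact hw
  have := hterm y hy
  rcases mul_eq_zero.mp this with h | h
  · exact absurd h hw
  · linarith


section Dom
variable {V : Type*} (G : WLFG V) {Ω : Set V}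

lemma mes_pos_of_mem (hΩ : G.IsBoundedDomain Ω) (hbd : (G.bdry Ω).Nonempty)
    {x : V} (hx : x ∈ Ω) : 0 < G.mes x := by
  by_cases hxb : x ∈ G.bdry Ω
  · obtain ⟨y, _, hadj⟩ := hxb.2
    exact G.mes_pos hadj
  · obtain ⟨b, hb⟩ := hbd
    have hne : x ≠ b := fun h => hxb (h ▸ hb)
    have h := hΩ.1 x hx b hb.1
    rcases (Relation.ReflTransGen.cases_head h) with h | ⟨z, hz, _⟩
    · exact absurd h hne
    · exact G.mes_pos hz.2.2

lemma poincare (hΩ : G.IsBoundedDomain Ω) (hbd : (G.bdry Ω).Nonempty) :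
    ∃ C : ℝ, 0 < C ∧ ∀ (v : V → ℝ) (M : ℝ), 0 ≤ M → (∀ z ∈ Ω, G.slope v z ≤ M) →
      (∀ z ∈ G.bdry Ω, v z = 0) → ∀ x ∈ Ω, |v x| ≤ C * M := by
  obtain ⟨b, hb⟩ := hbd
  have key : ∀ x ∈ Ω, ∃ c : ℝ, 0 ≤ c ∧ ∀ (v : V → ℝ) (M : ℝ), 0 ≤ M →
      (∀ z ∈ Ω, G.slope v z ≤ M) → |v b - v x| ≤ c * M := by
    intro x hx
    have h := hΩ.1 x hx b hb.1
    clear hx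
    induction h using Relation.ReflTransGen.head_induction_on with
    | refl => exact ⟨0, le_refl 0, fun v M hM _ => by simp⟩
    | @head a a' hrel hrtg ih =>
      obtain ⟨c, hc0, hc⟩ := ih
      obtain ⟨ha, ha', hadj⟩ := hrel
      refine ⟨c + Real.sqrt (2 * G.mes a / G.w a a'), by positivity, ?_⟩
      intro v M hM hsl
      have h1 : |v a' - v a| ≤ Real.sqrt (2 * G.mes a / G.w a a') * M := by
        calc |v a' - v a| ≤ Real.sqrt (2 * G.mes a / G.w a a') * G.slope v a :=
              G.edge_abs_le v hadj
          _ ≤ _ := by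
              apply mul_le_mul_of_nonneg_left (hsl a ha) (Real.sqrt_nonneg _)
      have h2 := hc v M hM hsl
      calc |v b - v a| ≤ |v b - v a'| + |v a' - v a| := by
            have : v b - v a = (v b - v a') + (v a' - v a) := by ring
            rw [this]; exact abs_add_le _ _
        _ ≤ c * M + Real.sqrt (2 * G.mes a / G.w a a') * M := add_le_add h2 h1
        _ = _ := by ring
  choose! c hc0 hc using key
  have hΩne : Ω.Nonempty := ⟨b, hb.1⟩
  set s : Finset V := hΩ.2.toFinset with hs_def
  have hs : s.Nonempty := by
    rw [hs_def]
    exact ⟨b, (Set.Finite.mem_toFinset _).mpr hb.1⟩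
  refine ⟨s.sup' hs c + 1, ?_, ?_⟩
  · have : (0:ℝ) ≤ s.sup' hs c := by
      obtain ⟨z, hz⟩ := hs
      exact le_trans (hc0 z ((Set.Finite.mem_toFinset _).mp hz)) (Finset.le_sup' c hz)
    linarith
  · intro v M hM hsl hbv x hx
    have hxs : x ∈ s := (Set.Finite.mem_toFinset _).mpr hx
    have : |v x| = |v b - v x| := by rw [hbv b hb]; simp
    rw [this]
    calc |v b - v x| ≤ c x * M := hc x hx v M hM hsl
      _ ≤ (s.sup' hs c + 1) * M := by
          apply mul_le_mul_of_nonneg_right _ hM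
          have := Finset.le_sup' c hxs
          linarith

end Dom

section MaxP
variable {V : Type*} (G : WLFG V) {Ω : Set V}

lemma intr_adj_mem (hz : z ∈ G.intr Ω) (hw : G.w z y ≠ 0) : y ∈ Ω := by
  by_contra hy
  exact hz.2 ⟨hz.1, ⟨y, hy, lt_of_le_of_ne (G.nonneg z y) (Ne.symm hw)⟩⟩

lemma maxprinciple (hΩ : G.IsBoundedDomain Ω) (hint : (G.intr Ω).Nonempty)
    (hbd : (G.bdry Ω).Nonempty) :
    ∃ C : ℝ, 0 < C ∧ ∀ (v : V → ℝ) (M : ℝ), 0 ≤ M → (∀ z ∈ Ω, |G.lap v z| ≤ M) →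
      (∀ z ∈ G.bdry Ω, v z = 0) → ∀ x ∈ Ω, |v x| ≤ C * M := by
  classical
  have hioFin : (G.intr Ω).Finite := hΩ.2.subset (fun x hx => hx.1)
  set ι : Finset V := hioFin.toFinset with hι_def
  have hmemι : ∀ x, x ∈ ι ↔ x ∈ G.intr Ω := fun x => Set.Finite.mem_toFinset _
  -- extension operator
  set ften : (↥ι → ℝ) → V → ℝ := fun f x => if h : x ∈ ι then f ⟨x, h⟩ else 0 with hften
  have ften_add : ∀ f g, ften (f + g) = ften f + ften g := by
    intro f g; funext x; by_cases h : x ∈ ι <;> simp [hften, h]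
  have ften_smul : ∀ (c : ℝ) f, ften (c • f) = c • ften f := by
    intro c f; funext x; by_cases h : x ∈ ι <;> simp [hften, h]
  set L : (↥ι → ℝ) →ₗ[ℝ] (↥ι → ℝ) :=
    { toFun := fun f z => G.lap (ften f) z.1
      map_add' := by
        intro f g; funext z
        show G.lap (ften (f + g)) z.1 = G.lap (ften f) z.1 + G.lap (ften g) z.1
        rw [ften_add]; exact G.lap_add _ _ _
      map_smul' := by
        intro c f; funext z
        show G.lap (ften (c • f)) z.1 = ((RingHom.id ℝ) c • fun z : ↥ι => G.lap (ften f) z.1) z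
        rw [ften_smul]; simp only [RingHom.id_apply, Pi.smul_apply,
          smul_eq_mul]; exact G.lap_smul c _ _ } with hL_def
  -- half maximum principle
  have half : ∀ v : V → ℝ, (∀ x, x ∉ G.intr Ω → v x = 0) →
      (∀ z ∈ G.intr Ω, G.lap v z = 0) → ∀ x ∈ Ω, v x ≤ 0 := by
    intro v hv0 hvlap
    set s : Finset V := hΩ.2.toFinset with hs_def
    have hmems : ∀ x, x ∈ s ↔ x ∈ Ω := fun x => Set.Finite.mem_toFinset _
    obtain ⟨b, hb⟩ := hbd
    have hs : s.Nonempty := ⟨b, (hmems b).mpr hb.1⟩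
    set M : ℝ := s.sup' hs v with hM_def
    suffices hM : M ≤ 0 by
      intro x hx
      exact le_trans (Finset.le_sup' v ((hmems x).mpr hx)) hM
    by_contra hM
    push_neg at hM
    obtain ⟨x₀, hx₀s, hx₀⟩ := Finset.exists_mem_eq_sup' hs v
    have hx₀Ω : x₀ ∈ Ω := (hmems x₀).mp hx₀s
    have prop : ∀ y, Relation.ReflTransGen (fun a b => a ∈ Ω ∧ b ∈ Ω ∧ G.Adj a b) x₀ y →
        v y = M := by
      intro y h
      induction h with
      | refl => exact hx₀.symm
      | @tail b' c hrtg hrel ih =>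
        have hb'Ω : b' ∈ Ω := hrel.1
        have hb'i : b' ∈ G.intr Ω := by
          by_contra h'
          have : v b' = 0 := hv0 b' h'
          rw [ih] at this; linarith
        have hmes : 0 < G.mes b' := G.mes_pos_of_mem hΩ ⟨b, hb⟩ hb'Ω
        have hle : ∀ y, G.w b' y ≠ 0 → v y ≤ v b' := by
          intro y hw
          have hyΩ : y ∈ Ω := G.intr_adj_mem hb'i hw
          rw [ih]
          exact Finset.le_sup' v ((hmems y).mpr hyΩ)
        have := G.lap_zero_eq hmes (hvlap b' hb'i) hle c (ne_of_gt hrel.2.2)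
        rw [this, ih]
    have hvb := prop b (hΩ.1 x₀ hx₀Ω b hb.1)
    have : v b = 0 := hv0 b (fun h => h.2 hb)
    rw [this] at hvb; linarith
  -- injectivity of L
  have hinj : Function.Injective L := by
    rw [injective_iff_map_eq_zero]
    intro f hf
    have h1 : ∀ x ∈ Ω, ften f x ≤ 0 := by
      apply half
      · intro x hx
        simp only [hften]
        rw [dif_neg (fun h => hx ((hmemι x).mp h))]
      · intro z hz
        have : L f ⟨z, (hmemι z).mpr hz⟩ = 0 := by rw [hf]; rfl
        exact this
    have h2 : ∀ x ∈ Ω, ften ((-1 : ℝ) • f) x ≤ 0 := by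
      apply half
      · intro x hx
        simp only [hften]
        rw [dif_neg (fun h => hx ((hmemι x).mp h))]
      · intro z hz
        rw [ften_smul]
        have : G.lap ((-1 : ℝ) • ften f) z = (-1 : ℝ) * G.lap (ften f) z := G.lap_smul _ _ _
        rw [this]
        have : L f ⟨z, (hmemι z).mpr hz⟩ = 0 := by rw [hf]; rfl
        have h' : G.lap (ften f) z = 0 := this
        rw [h']; ring
    funext z
    have hzΩ : (z : V) ∈ Ω := ((hmemι z.1).mp z.2).1
    have ha := h1 z.1 hzΩ
    have hb' := h2 z.1 hzΩ
    rw [ften_smul] at hb'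
    simp only [Pi.smul_apply, smul_eq_mul] at hb'
    have hfz : ften f z.1 = f z := by simp [hften, z.2]
    rw [hfz] at ha
    rw [hfz] at hb'
    have : f z = 0 := by linarith
    exact this
  -- bounded inverse
  have hι_ne : Nonempty ↥ι := by
    obtain ⟨z, hz⟩ := hint
    exact ⟨⟨z, (hmemι z).mpr hz⟩⟩
  have hsurj : Function.Surjective L := (LinearMap.injective_iff_surjective).mp hinj
  set e : (↥ι → ℝ) ≃ₗ[ℝ] (↥ι → ℝ) := LinearEquiv.ofBijective L ⟨hinj, hsurj⟩ with he_def
  set T := LinearMap.toContinuousLinearMap (e.symm : (↥ι → ℝ) →ₗ[ℝ] (↥ι → ℝ)) with hT_def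
  refine ⟨‖T‖ + 1, by positivity, ?_⟩
  intro v M hM hlap hbv x hx
  set f : ↥ι → ℝ := fun z => v z.1 with hf_def
  have hLf : ∀ z : ↥ι, L f z = G.lap v z.1 := by
    intro z
    have hzi : (z : V) ∈ G.intr Ω := (hmemι z.1).mp z.2
    show G.lap (ften f) z.1 = G.lap v z.1
    apply G.lap_congr
    · simp [hften, z.2, hf_def]
    · intro y hw
      have hyΩ : y ∈ Ω := G.intr_adj_mem hzi hw
      by_cases hy : y ∈ ι
      · simp [hften, hy, hf_def]
      · have hyb : y ∈ G.bdry Ω := by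
          by_contra h'
          exact hy ((hmemι y).mpr ⟨hyΩ, h'⟩)
        simp only [hften]
        rw [dif_neg hy, hbv y hyb]
  have hnormLf : ‖L f‖ ≤ M := by
    rw [pi_norm_le_iff_of_nonneg hM]
    intro z
    rw [hLf z, Real.norm_eq_abs]
    exact hlap z.1 ((hmemι z.1).mp z.2).1
  have hnormf : ‖f‖ ≤ ‖T‖ * M := by
    have h1 : f = e.symm (L f) := by
      have : e f = L f := rfl
      rw [← this, LinearEquiv.symm_apply_apply]
    have h2 : e.symm (L f) = T (L f) := rfl
    rw [h1, h2]
    calc ‖T (L f)‖ ≤ ‖T‖ * ‖L f‖ := T.le_opNorm _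
      _ ≤ ‖T‖ * M := mul_le_mul_of_nonneg_left hnormLf (norm_nonneg T)
  by_cases hxi : x ∈ G.intr Ω
  · have : |v x| = ‖f ⟨x, (hmemι x).mpr hxi⟩‖ := by rw [Real.norm_eq_abs]
    rw [this]
    calc ‖f ⟨x, (hmemι x).mpr hxi⟩‖ ≤ ‖f‖ := norm_le_pi_norm f _
      _ ≤ ‖T‖ * M := hnormf
      _ ≤ (‖T‖ + 1) * M := by nlinarith [norm_nonneg T]
  · have hxb : x ∈ G.bdry Ω := by
      by_contra h'
      exact hxi ⟨hx, h'⟩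
    rw [hbv x hxb]
    simp only [abs_zero]
    positivity

end MaxP

section Main
variable {V : Type*} (G : WLFG V) {Ω : Set V}

lemma mslope_even {k : ℕ} (hk : k % 2 = 0) (u : V → ℝ) (x : V) :
    G.mslope k u x = |(G.lap)^[k / 2] u x| := by
  rw [mslope, if_neg (by omega)]

lemma mslope_odd {k : ℕ} (hk : k % 2 = 1) (u : V → ℝ) (x : V) :
    G.mslope k u x = G.slope ((G.lap)^[(k - 1) / 2] u) x := by
  rw [mslope, if_pos hk]

lemma mslope_nonneg (k : ℕ) (u : V → ℝ) (x : V) : 0 ≤ G.mslope k u x := by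
  rw [mslope]
  split
  · exact Real.sqrt_nonneg _
  · exact abs_nonneg _

lemma sup_bound (hΩ : G.IsBoundedDomain Ω) (hint : (G.intr Ω).Nonempty)
    (hbd : (G.bdry Ω).Nonempty) :
    ∀ k : ℕ, ∃ C : ℝ, 0 < C ∧ ∀ (u : V → ℝ) (M : ℝ), 0 ≤ M →
      (∀ z ∈ Ω, G.mslope k u z ≤ M) → G.MemW0 Ω k u → ∀ x ∈ Ω, |u x| ≤ C * M := by
  intro k
  induction k using Nat.strong_induction_on with
  | _ k ih =>
    by_cases hk0 : k = 0
    · subst hk0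
      refine ⟨1, one_pos, ?_⟩
      intro u M hM hsl _ x hx
      have := hsl x hx
      rw [G.mslope_even rfl] at this
      simpa using this
    by_cases hk1 : k % 2 = 1
    · -- odd case
      obtain ⟨C1, hC1, hP⟩ := G.poincare hΩ hbd
      obtain ⟨C0, hC0, hih⟩ := ih (k - 1) (by omega)
      refine ⟨C0 * C1, by positivity, ?_⟩
      intro u M hM hsl hW x hx
      set v : V → ℝ := (G.lap)^[(k - 1) / 2] u with hv_def
      have hvb : ∀ z ∈ G.bdry Ω, v z = 0 := by
        intro z hz
        have := hW (k - 1) (by omega) z hz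
        rwa [G.mslope_even (by omega), abs_eq_zero] at this
      have hslv : ∀ z ∈ Ω, G.slope v z ≤ M := by
        intro z hz
        have := hsl z hz
        rwa [G.mslope_odd hk1] at this
      have hv := hP v M hM hslv hvb
      have hsl' : ∀ z ∈ Ω, G.mslope (k - 1) u z ≤ C1 * M := by
        intro z hz
        rw [G.mslope_even (by omega)]
        exact hv z hz
      have hW' : G.MemW0 Ω (k - 1) u := fun j hj => hW j (by omega)
      have := hih u (C1 * M) (by positivity) hsl' hW' x hx
      calc |u x| ≤ C0 * (C1 * M) := this
        _ = C0 * C1 * M := by ring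
    · -- even case, k ≥ 2
      have hk2 : k % 2 = 0 := by omega
      have hkk : 2 ≤ k := by omega
      obtain ⟨C4, hC4, hMP⟩ := G.maxprinciple hΩ hint hbd
      obtain ⟨C0, hC0, hih⟩ := ih (k - 2) (by omega)
      refine ⟨C0 * C4, by positivity, ?_⟩
      intro u M hM hsl hW x hx
      set v : V → ℝ := (G.lap)^[k / 2 - 1] u with hv_def
      have hvb : ∀ z ∈ G.bdry Ω, v z = 0 := by
        intro z hz
        have := hW (k - 2) (by omega) z hz
        rw [G.mslope_even (by omega), abs_eq_zero] at this
        have e1 : (k - 2) / 2 = k / 2 - 1 := by omega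
        rwa [e1] at this
      have hlapv : ∀ z ∈ Ω, |G.lap v z| ≤ M := by
        intro z hz
        have := hsl z hz
        rw [G.mslope_even hk2] at this
        have e2 : k / 2 = (k / 2 - 1) + 1 := by omega
        rw [e2, Function.iterate_succ_apply'] at this
        exact this
      have hv := hMP v M hM hlapv hvb
      have hsl' : ∀ z ∈ Ω, G.mslope (k - 2) u z ≤ C4 * M := by
        intro z hz
        rw [G.mslope_even (by omega)]
        have e1 : (k - 2) / 2 = k / 2 - 1 := by omega
        rw [e1]
        exact hv z hz
      have hW' : G.MemW0 Ω (k - 2) u := fun j hj => hW j (by omega)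
      have := hih u (C4 * M) (by positivity) hsl' hW' x hx
      calc |u x| ≤ C0 * (C4 * M) := this
        _ = C0 * C4 * M := by ring

end Main

lemma lpNorm_eq {V : Type*} (G : WLFG V) {Ω : Set V} (hf : Ω.Finite) (r : ℝ) (u : V → ℝ) :
    G.lpNorm Ω r u = (∑ x ∈ hf.toFinset, |u x| ^ r * G.mes x) ^ (1 / r) := by
  rw [lpNorm, finsum_mem_eq_finite_toFinset_sum _ hf]

end WLFG

theorem sobolev_embedding {V : Type*} (G : WLFG V) (Ω : Set V)
    (hΩ : G.IsBoundedDomain Ω) (hint : (G.intr Ω).Nonempty) (hbd : (G.bdry Ω).Nonempty)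
    (m : ℕ) (hm : 1 ≤ m) (p : ℝ) (hp : 1 ≤ p) :
    ∃ C : ℝ, 0 < C ∧ ∀ u : V → ℝ, G.MemW0 Ω m u →
      (∀ q : ℝ, 1 ≤ q → G.lpNorm Ω q u ≤ C * G.lpNorm Ω p (G.mslope m u)) ∧
      G.linfNorm Ω u ≤ C * G.lpNorm Ω p (G.mslope m u) := by
  classical
  have hp0 : 0 < p := lt_of_lt_of_le one_pos hp
  set s : Finset V := hΩ.2.toFinset with hs_def
  have hmems : ∀ x, x ∈ s ↔ x ∈ Ω := fun x => Set.Finite.mem_toFinset _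
  have hΩne : Ω.Nonempty := hint.mono (fun x hx => hx.1)
  obtain ⟨x₁, hx₁⟩ := hΩne
  have hs : s.Nonempty := ⟨x₁, (hmems _).mpr hx₁⟩
  have hmespos : ∀ x ∈ Ω, 0 < G.mes x := fun x hx => G.mes_pos_of_mem hΩ hbd hx
  obtain ⟨A, hA, hAb⟩ := G.sup_bound hΩ hint hbd m
  -- minimal measure over Ω
  set mmin : ℝ := s.inf' hs G.mes with hmmin_def
  have hmmin : 0 < mmin := by
    obtain ⟨z, hz, he⟩ := Finset.exists_mem_eq_inf' hs G.mes
    rw [hmmin_def, he]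
    exact hmespos z ((hmems z).mp hz)
  set Cp : ℝ := (mmin ^ (1 / p))⁻¹ with hCp_def
  have hCp : 0 < Cp := by
    rw [hCp_def]
    exact inv_pos.mpr (Real.rpow_pos_of_pos hmmin _)
  -- total measure over Ω
  set mtot : ℝ := ∑ x ∈ s, G.mes x with hmtot_def
  have hmtot0 : 0 ≤ mtot := Finset.sum_nonneg fun x _ => G.mes_nonneg x
  set K : ℝ := max 1 mtot with hK_def
  have hK1 : (1 : ℝ) ≤ K := le_max_left _ _
  have hK0 : 0 < K := lt_of_lt_of_le one_pos hK1
  refine ⟨A * Cp * K, by positivity, ?_⟩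
  intro u hu
  set g : V → ℝ := G.mslope m u with hg_def
  have hg0 : ∀ x, 0 ≤ g x := fun x => G.mslope_nonneg m u x
  set R : ℝ := G.lpNorm Ω p g with hR_def
  set S : ℝ := ∑ x ∈ s, |g x| ^ p * G.mes x with hS_def
  have hterm0 : ∀ x ∈ s, 0 ≤ |g x| ^ p * G.mes x := fun x _ =>
    mul_nonneg (Real.rpow_nonneg (abs_nonneg _) _) (G.mes_nonneg x)
  have hS0 : 0 ≤ S := Finset.sum_nonneg hterm0
  have hRS : R = S ^ (1 / p) := by rw [hR_def, G.lpNorm_eq hΩ.2]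
  have hR0 : 0 ≤ R := by rw [hRS]; exact Real.rpow_nonneg hS0 _
  -- E1 : pointwise bound of g by its L^p norm
  have hE1 : ∀ x ∈ Ω, g x ≤ Cp * R := by
    intro x hx
    have hxs : x ∈ s := (hmems x).mpr hx
    have h1 : |g x| ^ p * mmin ≤ S := by
      calc |g x| ^ p * mmin ≤ |g x| ^ p * G.mes x := by
            apply mul_le_mul_of_nonneg_left _ (Real.rpow_nonneg (abs_nonneg _) _)
            exact Finset.inf'_le G.mes hxs
        _ ≤ S := Finset.single_le_sum hterm0 hxs
    have h2 : |g x| ^ p ≤ S / mmin := (le_div_iff₀ hmmin).mpr h1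
    have h3 : |g x| ≤ (S / mmin) ^ (1 / p) := by
      have := Real.rpow_le_rpow (Real.rpow_nonneg (abs_nonneg (g x)) p) h2
        (le_of_lt (by positivity : (0:ℝ) < 1 / p))
      rwa [one_div, Real.rpow_rpow_inv (abs_nonneg _) (ne_of_gt hp0), ← one_div] at this
    calc g x = |g x| := (abs_of_nonneg (hg0 x)).symm
      _ ≤ (S / mmin) ^ (1 / p) := h3
      _ = S ^ (1 / p) * (mmin ^ (1 / p))⁻¹ := by
          rw [Real.div_rpow hS0 (le_of_lt hmmin), div_eq_mul_inv]
      _ = Cp * R := by rw [hRS, hCp_def]; ring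
  -- sup of g over Ω and sup bound for u
  have hsup : ∀ x ∈ Ω, |u x| ≤ A * (Cp * R) := by
    apply hAb u (Cp * R) (by positivity) _ hu
    intro z hz
    exact hE1 z hz
  have hACR0 : 0 ≤ A * Cp * R := by positivity
  constructor
  · -- L^q bounds
    intro q hq
    have hq0 : 0 < q := lt_of_lt_of_le one_pos hq
    rw [G.lpNorm_eq hΩ.2]
    have hsum : ∑ x ∈ hΩ.2.toFinset, |u x| ^ q * G.mes x ≤ (A * Cp * R) ^ q * mtot := by
      rw [hmtot_def, Finset.mul_sum]
      apply Finset.sum_le_sum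
      intro x hxs
      apply mul_le_mul_of_nonneg_right _ (G.mes_nonneg x)
      exact Real.rpow_le_rpow (abs_nonneg _)
        (by have := hsup x ((hmems x).mp hxs); linarith) (le_of_lt hq0)
    calc (∑ x ∈ hΩ.2.toFinset, |u x| ^ q * G.mes x) ^ (1 / q)
        ≤ ((A * Cp * R) ^ q * mtot) ^ (1 / q) := by
          apply Real.rpow_le_rpow (Finset.sum_nonneg fun x _ =>
            mul_nonneg (Real.rpow_nonneg (abs_nonneg _) _) (G.mes_nonneg x)) hsum
            (le_of_lt (by positivity))
      _ = (A * Cp * R) * mtot ^ (1 / q) := by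
          rw [Real.mul_rpow (Real.rpow_nonneg hACR0 _) hmtot0, one_div,
            Real.rpow_rpow_inv hACR0 (ne_of_gt hq0)]
      _ ≤ (A * Cp * R) * K := by
          apply mul_le_mul_of_nonneg_left _ hACR0
          rcases le_total mtot 1 with h | h
          · calc mtot ^ (1 / q) ≤ (1 : ℝ) ^ (1 / q) :=
                  Real.rpow_le_rpow hmtot0 h (le_of_lt (by positivity))
              _ = 1 := Real.one_rpow _
              _ ≤ K := hK1
          · calc mtot ^ (1 / q) ≤ mtot ^ (1 : ℝ) :=
                  Real.rpow_le_rpow_of_exponent_le h (by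
                    rw [div_le_one hq0]; exact hq)
              _ = mtot := Real.rpow_one _
              _ ≤ K := le_max_right _ _
      _ = A * Cp * K * R := by ring
  · -- L^∞ bound
    rw [WLFG.linfNorm]
    apply csSup_le ((Set.nonempty_of_mem hx₁).image _)
    rintro b ⟨x, hx, rfl⟩
    calc |u x| ≤ A * (Cp * R) := hsup x hx
      _ ≤ A * Cp * K * R := by nlinarith
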